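/- Let C be a monotone, zero-based, hierarchically consistent cost family on d dimensions, let Δ be a last-level gap bound for the family, and let Q_l ≤ Q_u < C_0(N 0). Let x̄_l = FindPartition(Q_l) and x̄_u = FindPartition(Q_u). Then, as integers, |(C(x̄_u) − C(x̄_l)) − (Q_u − Q_l)| < Δ; that is, the cost of coiteration between the two returned boundaries differs from the query gap Q_u − Q_l by less than Δ. -/

import Mathlib

noncomputable section

open scoped Classical
open Finset

namespace Nacho

/-- A prefix `p` is valid up to length `m` if its entries below `m` are within the extents. -/
def ValidPrefix {d : ℕ} (N : Fin d → ℕ) (m : ℕ) (p : Fin d → ℕ) : Prop :=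
  ∀ k : Fin d, (k : ℕ) < m → p k < N k

/-- A family of cost functions only depends on the prefix below its level. -/
def PrefixDep {d : ℕ} (C : Fin d → (Fin d → ℕ) → ℕ → ℕ) : Prop :=
  ∀ (m : Fin d) (p p' : Fin d → ℕ) (x : ℕ),
    (∀ k : Fin d, (k : ℕ) < (m : ℕ) → p k = p' k) → C m p x = C m p' x

/-- Monotone cost family. -/
def IsMonotoneFam {d : ℕ} (N : Fin d → ℕ) (C : Fin d → (Fin d → ℕ) → ℕ → ℕ) : Prop :=
  ∀ (m : Fin d) (p : Fin d → ℕ), ValidPrefix N (m : ℕ) p →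
    ∀ x : ℕ, x < N m → C m p x ≤ C m p (x + 1)

/-- Zero-based cost family. -/
def IsZeroBased {d : ℕ} (N : Fin d → ℕ) (C : Fin d → (Fin d → ℕ) → ℕ → ℕ) : Prop :=
  ∀ (m : Fin d) (p : Fin d → ℕ), ValidPrefix N (m : ℕ) p → C m p 0 = 0

/-- Hierarchically consistent cost family. -/
def IsHierConsistent {d : ℕ} (N : Fin d → ℕ) (C : Fin d → (Fin d → ℕ) → ℕ → ℕ) : Prop :=
  ∀ (m : Fin d) (h : (m : ℕ) + 1 < d) (p : Fin d → ℕ), ValidPrefix N (m : ℕ) p →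
    ∀ x : ℕ, x < N m →
      C m p (x + 1)
        = C m p x + C ⟨(m : ℕ) + 1, h⟩ (Function.update p m x) (N ⟨(m : ℕ) + 1, h⟩)

/-- One step of the hierarchical search: at level `m`, pick the greatest in-range coordinate
whose cost does not exceed the residual, record it, and subtract its cost. -/
def partStep {d : ℕ} (N : Fin d → ℕ) (C : Fin d → (Fin d → ℕ) → ℕ → ℕ) (m : ℕ)
    (st : (Fin d → ℕ) × ℕ) : (Fin d → ℕ) × ℕ :=
  if h : m < d then
    let x := Nat.findGreatest (fun y => C ⟨m, h⟩ st.1 y ≤ st.2) (N ⟨m, h⟩ - 1)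
    (Function.update st.1 ⟨m, h⟩ x, st.2 - C ⟨m, h⟩ st.1 x)
  else st

/-- Partially-built coordinate and residual after the first `m` levels of `FindPartition`. -/
def partState {d : ℕ} (N : Fin d → ℕ) (C : Fin d → (Fin d → ℕ) → ℕ → ℕ) (Q : ℕ) :
    ℕ → (Fin d → ℕ) × ℕ
  | 0 => (fun _ => 0, Q)
  | m + 1 => partStep N C m (partState N C Q m)

/-- `FindPartition` of the hierarchical search partitioning algorithm. -/
def findPartition {d : ℕ} (N : Fin d → ℕ) (C : Fin d → (Fin d → ℕ) → ℕ → ℕ) (Q : ℕ) :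
    Fin d → ℕ :=
  (partState N C Q d).1

/-- Residual cost `R_m` of `FindPartition`. -/
def residual {d : ℕ} (N : Fin d → ℕ) (C : Fin d → (Fin d → ℕ) → ℕ → ℕ) (Q : ℕ) (m : ℕ) : ℕ :=
  (partState N C Q m).2

/-- Total cost of a coordinate tuple. -/
def totalCost {d : ℕ} (C : Fin d → (Fin d → ℕ) → ℕ → ℕ) (y : Fin d → ℕ) : ℕ :=
  ∑ m : Fin d, C m y (y m)

/-- Strict lexicographic order on coordinate tuples. -/
def LexLt {d : ℕ} (x y : Fin d → ℕ) : Prop :=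
  ∃ m : Fin d, (∀ k : Fin d, (k : ℕ) < (m : ℕ) → x k = y k) ∧ x m < y m

/-- Reflexive lexicographic order on coordinate tuples. -/
def LexLe {d : ℕ} (x y : Fin d → ℕ) : Prop :=
  LexLt x y ∨ x = y

/-- `Δ` bounds the cost gap between adjacent coordinates at the last level. -/
def LastLevelGapBound {d : ℕ} (N : Fin d → ℕ) (C : Fin d → (Fin d → ℕ) → ℕ → ℕ) (Δ : ℕ) :
    Prop :=
  ∀ (hd : 0 < d) (p : Fin d → ℕ), ValidPrefix N (d - 1) p →
    ∀ x : ℕ, x < N ⟨d - 1, Nat.sub_lt hd Nat.one_pos⟩ →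
      C ⟨d - 1, Nat.sub_lt hd Nat.one_pos⟩ p (x + 1)
        - C ⟨d - 1, Nat.sub_lt hd Nat.one_pos⟩ p x ≤ Δ

/-- The count cost family of a finite set of nonzero coordinates. -/
def countCost {d : ℕ} (N : Fin d → ℕ) (S : Finset ((m : Fin d) → Fin (N m))) :
    Fin d → (Fin d → ℕ) → ℕ → ℕ :=
  fun m p x =>
    (S.filter fun c =>
      (∀ k : Fin d, (k : ℕ) < (m : ℕ) → (c k : ℕ) = p k) ∧ (c m : ℕ) < x).card

/-- The summed count family of finitely many finite sets of nonzero coordinates. -/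
def summedCost {d : ℕ} (N : Fin d → ℕ) {t : ℕ}
    (S : Fin t → Finset ((m : Fin d) → Fin (N m))) :
    Fin d → (Fin d → ℕ) → ℕ → ℕ :=
  fun m p x => ∑ i, countCost N (S i) m p x

section AuxLemmas

variable {d : ℕ} {N : Fin d → ℕ} {C : Fin d → (Fin d → ℕ) → ℕ → ℕ}

lemma mono_range (hMono : IsMonotoneFam N C) (m : Fin d) (p : Fin d → ℕ)
    (hp : ValidPrefix N (m : ℕ) p) : ∀ x y : ℕ, x ≤ y → y ≤ N m → C m p x ≤ C m p y := by
  intro x y hxy hy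
  induction y with
  | zero => simp [Nat.le_zero.mp hxy]
  | succ n ih =>
    rcases Nat.lt_or_ge x (n + 1) with h | h
    · exact le_trans (ih (Nat.lt_succ_iff.mp h) (le_trans (Nat.le_succ n) hy))
        (hMono m p hp n (Nat.lt_of_succ_le hy))
    · have : x = n + 1 := le_antisymm hxy h
      simp [this]

lemma state_stable (Q : ℕ) : ∀ m n : ℕ, m ≤ n → ∀ k : Fin d, (k : ℕ) < m →
    (partState N C Q n).1 k = (partState N C Q m).1 k := by
  intro m n hmn
  induction n with
  | zero =>
    intro k hk
    have : m = 0 := Nat.le_zero.mp hmn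
    simp [this]
  | succ n ih =>
    intro k hk
    rcases Nat.lt_or_ge m (n + 1) with h | h
    · have hm : m ≤ n := Nat.lt_succ_iff.mp h
      have hkn : (k : ℕ) < n + 1 := lt_of_lt_of_le hk hmn
      rw [show partState N C Q (n + 1) = partStep N C n (partState N C Q n) from rfl]
      unfold partStep
      by_cases hnd : n < d
      · simp only [dif_pos hnd]
        rw [Function.update_of_ne ?_ _ _]
        · exact ih hm k hk
        · intro he
          have : (k : ℕ) = n := by rw [he]
          omega
      · simp only [dif_neg hnd]
        exact ih hm k hk
    · have : m = n + 1 := le_antisymm hmn h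
      simp [this]

lemma key (hd : 0 < d) (hN : ∀ m, 1 ≤ N m) (hPD : PrefixDep C)
    (hMono : IsMonotoneFam N C) (hZero : IsZeroBased N C) (hHC : IsHierConsistent N C)
    {Δ : ℕ} (hΔ : LastLevelGapBound N C Δ)
    (Q : ℕ) (hQ : Q < C ⟨0, hd⟩ (fun _ => 0) (N ⟨0, hd⟩)) :
    totalCost C (findPartition N C Q) + residual N C Q d = Q ∧ residual N C Q d < Δ := by
  set xb := findPartition N C Q with hxb
  set C' : ℕ → ℕ := fun k => if h : k < d then C ⟨k, h⟩ xb (xb ⟨k, h⟩) else 0 with hC'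
  have INV : ∀ m : ℕ, m ≤ d →
      (∀ k : Fin d, (partState N C Q m).1 k < N k) ∧
      (∀ hmd : m < d,
        (partState N C Q m).2 < C ⟨m, hmd⟩ (partState N C Q m).1 (N ⟨m, hmd⟩)) ∧
      ((∑ k ∈ Finset.range m, C' k) + (partState N C Q m).2 = Q) ∧
      (m = d → (partState N C Q m).2 < Δ) := by
    intro m
    induction m with
    | zero =>
      intro _
      refine ⟨fun k => lt_of_lt_of_le Nat.zero_lt_one (hN k), ?_, by simp [partState], ?_⟩
      · intro hmd
        have : (⟨0, hmd⟩ : Fin d) = ⟨0, hd⟩ := rfl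
        simpa [partState, this] using hQ
      · intro h0; omega
    | succ m ih =>
      intro hm1
      have hm : m < d := hm1
      obtain ⟨hval, hres, hsum, _⟩ := ih (le_of_lt hm)
      set st := partState N C Q m with hst
      set p := st.1 with hp
      set R := st.2 with hR
      have hvp : ∀ n : ℕ, ValidPrefix N n p := fun n k _ => hval k
      set mF : Fin d := ⟨m, hm⟩ with hmF
      set x := Nat.findGreatest (fun y => C mF p y ≤ R) (N mF - 1) with hx
      have hstep : partState N C Q (m + 1) = (Function.update p mF x, R - C mF p x) := by
        rw [show partState N C Q (m + 1) = partStep N C m st from rfl]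
        unfold partStep
        simp only [dif_pos hm]
        rfl
      have hxle : x ≤ N mF - 1 := Nat.findGreatest_le _
      have hxlt : x < N mF := lt_of_le_of_lt hxle (Nat.sub_lt (hN mF) Nat.one_pos)
      have hCx_le : C mF p x ≤ R := by
        have h0 : C mF p 0 ≤ R := by rw [hZero mF p (hvp m)]; exact Nat.zero_le R
        have hs := Nat.findGreatest_spec (P := fun y => C mF p y ≤ R)
          (Nat.zero_le (N mF - 1)) h0
        rwa [← hx] at hs
      have hR_lt : R < C mF p (x + 1) := by
        rcases Nat.lt_or_ge x (N mF - 1) with hlt | hge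
        · have hmax : ¬ (C mF p (x + 1) ≤ R) :=
            Nat.findGreatest_is_greatest (P := fun y => C mF p y ≤ R)
              (Nat.lt_succ_of_le (le_of_eq hx.symm)) (by omega)
          omega
        · have hxe : x = N mF - 1 := le_antisymm hxle hge
          have : x + 1 = N mF := by
            have := hN mF; omega
          rw [this]
          exact hres hm
      have hval' : ∀ k : Fin d, Function.update p mF x k < N k := by
        intro k
        by_cases hk : k = mF
        · rw [hk, Function.update_self]; exact hxlt
        · rw [Function.update_of_ne hk]; exact hval k
      -- coordinate at m of final tuple
      have hxbm : xb mF = x := by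
        have h1 : xb mF = (partState N C Q (m + 1)).1 mF := by
          rw [hxb]
          unfold findPartition
          exact state_stable Q (m + 1) d hm1 mF (Nat.lt_succ_self m)
        rw [h1, hstep]
        show Function.update p mF x mF = x
        rw [Function.update_self]
      have hprefix : C mF xb x = C mF p x := by
        apply hPD
        intro k hk
        have h1 : xb k = (partState N C Q m).1 k := by
          rw [hxb]
          unfold findPartition
          exact state_stable Q m d (le_of_lt hm) k hk
        rw [h1]
      have hC'm : C' m = C mF p x := by
        rw [hC']
        simp only [dif_pos hm]
        rw [← hmF, hxbm, hprefix]
      refine ⟨?_, ?_, ?_, ?_⟩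
      · rw [hstep]; exact hval'
      · intro hmd'
        have hhc := hHC mF hmd' p (hvp m) x hxlt
        rw [hstep]
        simp only
        have : C ⟨(mF : ℕ) + 1, hmd'⟩ (Function.update p mF x) (N ⟨(mF : ℕ) + 1, hmd'⟩)
            = C mF p (x + 1) - C mF p x := by omega
        rw [show (⟨m + 1, hmd'⟩ : Fin d) = ⟨(mF : ℕ) + 1, hmd'⟩ from rfl, this]
        omega
      · rw [hstep]
        simp only
        rw [Finset.sum_range_succ, hC'm]
        omega
      · intro hdm
        have hme : m = d - 1 := by omega
        rw [hstep]
        simp only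
        have hgap : C mF p (x + 1) - C mF p x ≤ Δ := by
          have := hΔ hd p (hvp (d - 1)) x (by
            have : (⟨d - 1, Nat.sub_lt hd Nat.one_pos⟩ : Fin d) = mF := by
              apply Fin.ext; simp [hmF, hme]
            rw [this]; exact hxlt)
          have heq : (⟨d - 1, Nat.sub_lt hd Nat.one_pos⟩ : Fin d) = mF := by
            apply Fin.ext; simp [hmF, hme]
          rwa [heq] at this
        omega
  obtain ⟨_, _, hsum, hlast⟩ := INV d le_rfl
  have htot : totalCost C xb = ∑ k ∈ Finset.range d, C' k := by
    unfold totalCost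
    rw [← Fin.sum_univ_eq_sum_range]
    apply Finset.sum_congr rfl
    intro i _
    rw [hC']
    simp only [dif_pos i.isLt, Fin.eta]
  constructor
  · unfold residual
    rw [htot, hsum]
  · exact hlast rfl

end AuxLemmas

/-- the cost of coiteration between the two returned boundaries differs from
the query gap `Q_u - Q_l` by less than `Δ` (as integers). -/
theorem stmt7 {d : ℕ} (hd : 0 < d) {N : Fin d → ℕ} (hN : ∀ m, 1 ≤ N m)
    (C : Fin d → (Fin d → ℕ) → ℕ → ℕ) (hPD : PrefixDep C)
    (hMono : IsMonotoneFam N C) (hZero : IsZeroBased N C) (hHC : IsHierConsistent N C)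
    (Δ : ℕ) (hΔ : LastLevelGapBound N C Δ)
    (Ql Qu : ℕ) (hle : Ql ≤ Qu) (hQu : Qu < C ⟨0, hd⟩ (fun _ => 0) (N ⟨0, hd⟩)) :
    |((totalCost C (findPartition N C Qu) : ℤ) - (totalCost C (findPartition N C Ql) : ℤ))
        - ((Qu : ℤ) - (Ql : ℤ))| < (Δ : ℤ) := by
  obtain ⟨hu1, hu2⟩ := key hd hN hPD hMono hZero hHC hΔ Qu hQu
  obtain ⟨hl1, hl2⟩ := key hd hN hPD hMono hZero hHC hΔ Ql (lt_of_le_of_lt hle hQu)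
  rw [abs_lt]
  constructor <;> omega

end Nacho
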